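/- arXiv:1912.12413 — 2 statements merged into one kernel-verified Lean document; each statement's English description precedes it below -/
import Mathlib

section
/- The ε-acceptability relation with margin ε > 0 is not transitive in general: there exist endpoint values for models f, f', f'' such that f →_ε f' and f' →_ε f'' but f does not →_ε f''; in particular repeated ε-acceptable updates can produce a model strictly inferior to the original (bio-creep). -/
/-- The `ε`-acceptability relation with margin `ε > 0` is not transitive: for every `ε > 0`
there are endpoint vectors `v₀, v₁, v₂ : Fin 2 → ℝ` with `v₀ →_ε v₁` and `v₁ →_ε v₂` but not
`v₀ →_ε v₂`; moreover `v₂` can be taken strictly inferior to `v₀` in both endpoints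
(bio-creep), where `u →_ε w` means `u k - ε ≤ w k` for all `k` and `u k < w k` for some `k`. -/
theorem acceptability_not_transitive_biocreep :
    ∀ ε : ℝ, 0 < ε →
      ∃ v₀ v₁ v₂ : Fin 2 → ℝ,
        ((∀ k, v₀ k - ε ≤ v₁ k) ∧ (∃ k, v₀ k < v₁ k)) ∧
        ((∀ k, v₁ k - ε ≤ v₂ k) ∧ (∃ k, v₁ k < v₂ k)) ∧
        ¬ ((∀ k, v₀ k - ε ≤ v₂ k) ∧ (∃ k, v₀ k < v₂ k)) ∧
        (∀ k, v₂ k < v₀ k) := by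
  intro ε hε
  refine ⟨![0, 0], ![-(ε/2), ε/4], ![-(ε/4), -(ε/2)], ⟨?_, ⟨1, by norm_num; linarith⟩⟩,
    ⟨?_, ⟨0, by norm_num; linarith⟩⟩, ?_, ?_⟩
  · intro k; fin_cases k <;> simp <;> linarith
  · intro k; fin_cases k <;> simp <;> linarith
  · rintro ⟨-, k, hk⟩; fin_cases k <;> simp at hk <;> linarith
  · intro k; fin_cases k <;> simp <;> linarith
end

section
/- Iterating the modification that decreases one endpoint by ε/2 and increases the other by ε/4, alternating which endpoint is decreased, yields after 2n steps a model whose both endpoints equal the original values minus nε/4; hence both endpoints decrease without bound while every single step is ε-acceptable. -/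
/-- Alternating modifications that decrease one endpoint by `ε/2` and increase the other by
`ε/4`: every single step is `ε`-acceptable, yet after `2n` steps both endpoints equal the
original values minus `n * ε / 4`, so performance decreases without bound. -/
theorem alternating_biocreep
    (ε a b : ℝ) (hε : 0 < ε) (v : ℕ → Fin 2 → ℝ)
    (h0 : v 0 = ![a, b])
    (hodd : ∀ i : ℕ, v (2 * i + 1) = v (2 * i) + ![-(ε / 2), ε / 4])
    (heven : ∀ i : ℕ, v (2 * i + 2) = v (2 * i + 1) + ![ε / 4, -(ε / 2)]) :
    (∀ i : ℕ,
      ((∀ k, v (2 * i) k - ε ≤ v (2 * i + 1) k) ∧ (∃ k, v (2 * i) k < v (2 * i + 1) k)) ∧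
      ((∀ k, v (2 * i + 1) k - ε ≤ v (2 * i + 2) k) ∧
        (∃ k, v (2 * i + 1) k < v (2 * i + 2) k))) ∧
    (∀ n : ℕ, v (2 * n) = ![a - n * ε / 4, b - n * ε / 4]) := by
  constructor
  · intro i
    have ho := congrFun (hodd i)
    have he := congrFun (heven i)
    refine ⟨⟨fun k => ?_, ⟨1, ?_⟩⟩, ⟨fun k => ?_, ⟨0, ?_⟩⟩⟩
    · fin_cases k <;> simp_all <;> linarith
    · have := ho 1; simp at this; rw [this]; linarith
    · fin_cases k <;> simp_all <;> linarith
    · have := he 0; simp at this; rw [this]; linarith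
  · intro n
    induction n with
    | zero => simpa using h0
    | succ m ih =>
      have h1 := hodd m
      have h2 := heven m
      have : 2 * (m + 1) = 2 * m + 1 + 1 := by ring
      rw [this, h2, h1, ih]
      funext k
      fin_cases k <;> simp [Matrix.cons_val_zero, Matrix.cons_val_one] <;> push_cast <;> ring
end
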